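/- Let G be a 3×3 symmetric positive definite matrix with nonnegative entries satisfying G(i,j)·G(k,k) ≥ G(i,k)·G(j,k) for all choices of distinct indices i, j, k in {1,2,3}. Then all off-diagonal entries of G⁻¹ are nonpositive. -/
import Mathlib

/-- For a `3 × 3` symmetric positive definite matrix `G` with nonnegative
entries satisfying the triangle Green-function inequality
`G(i,k) G(j,k) ≤ G(i,j) G(k,k)` for all distinct `i, j, k`, all off-diagonal
entries of `G⁻¹` are nonpositive. -/
theorem inv_offdiag_nonpos_of_green_inequality
    (G : Matrix (Fin 3) (Fin 3) ℝ) (hsymm : G.IsSymm) (hpd : G.PosDef)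
    (hnn : ∀ i j, 0 ≤ G i j)
    (htri : ∀ i j k : Fin 3, i ≠ j → j ≠ k → i ≠ k →
      G i k * G j k ≤ G i j * G k k) :
    ∀ i j, i ≠ j → G⁻¹ i j ≤ 0 := by
  intro i j hij
  have hdet : 0 < G.det := hpd.det_pos
  have hinv : G⁻¹ = G.det⁻¹ • G.adjugate := by
    rw [Matrix.inv_def, Ring.inverse_eq_inv']
  have hadj : G.adjugate i j ≤ 0 := by
    have hs : ∀ a b : Fin 3, G a b = G b a := fun a b => hsymm.apply b a
    rw [Matrix.adjugate_fin_three]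
    have h1 := htri 0 1 2 (by decide) (by decide) (by decide)
    have h2 := htri 0 2 1 (by decide) (by decide) (by decide)
    have h3 := htri 1 2 0 (by decide) (by decide) (by decide)
    try simp only [hs 1 0, hs 2 0, hs 2 1] at h1 h2 h3
    fin_cases i <;> fin_cases j <;> simp at hij ⊢ <;>
      (try simp only [hs 1 0, hs 2 0, hs 2 1]) <;> linarith
  rw [hinv]
  simp only [Matrix.smul_apply, smul_eq_mul]
  exact mul_nonpos_of_nonneg_of_nonpos (by positivity) hadj
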